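/- There exist infinitely many finite (solvable) groups G with a subgroup H such that ψ_H(G) > ψ_{H_m}(C_n), where n = |G|, m = |H|, and H_m is the unique subgroup of order m of C_n. -/

import Mathlib

set_option maxRecDepth 10000

open Finset

/-- The order of `x` relative to the subgroup `H`: the least positive `m` with `x ^ m ∈ H`. -/
noncomputable def relOrder {G : Type*} [Group G] (H : Subgroup G) (x : G) : ℕ :=
  sInf {m : ℕ | 0 < m ∧ x ^ m ∈ H}

/-- `ψ_H(G)`, the sum of element orders of `G` relative to the subgroup `H`. -/
noncomputable def psiRel (G : Type*) [Group G] [Fintype G] (H : Subgroup G) : ℕ :=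
  ∑ x : G, relOrder H x

/-- `ψ(G)`, the sum of element orders of `G`. -/
noncomputable def psi (G : Type*) [Group G] [Fintype G] : ℕ :=
  ∑ x : G, orderOf x

lemma relOrder_eq {G : Type*} [Group G] (H : Subgroup G) (x : G) (m : ℕ)
    (h0 : 0 < m) (hm : x ^ m ∈ H) (hmin : ∀ k, k < m → 0 < k → x ^ k ∉ H) :
    relOrder H x = m := by
  have hne : {n : ℕ | 0 < n ∧ x ^ n ∈ H}.Nonempty := ⟨m, h0, hm⟩
  refine le_antisymm (Nat.sInf_le ⟨h0, hm⟩) ?_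
  by_contra h
  push_neg at h
  obtain ⟨hpos, hmem⟩ := Nat.sInf_mem hne
  exact hmin _ h hpos hmem

/-! ### The concrete group `Fc = (C₂)³ ⋊ C₇` of order 56 -/

abbrev V3 : Type := Bool × Bool × Bool

def vadd : V3 → V3 → V3 := fun v w => (xor v.1 w.1, xor v.2.1 w.2.1, xor v.2.2 w.2.2)

def Tmap : V3 → V3 := fun v => (v.2.2, xor v.1 v.2.2, v.2.1)

def Fc : Type := V3 × Fin 7

instance : DecidableEq Fc := inferInstanceAs (DecidableEq (V3 × Fin 7))
instance : Fintype Fc := inferInstanceAs (Fintype (V3 × Fin 7))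

def act : Fin 7 → V3 → V3 := fun k v => Tmap^[k.val] v

instance : Mul Fc := ⟨fun x y => (vadd x.1 (act x.2 y.1), x.2 + y.2)⟩
instance : One Fc := ⟨((false, false, false), 0)⟩
instance : Inv Fc := ⟨fun x => (act (-x.2) x.1, -x.2)⟩

lemma vadd_assoc' : ∀ a b c : V3, vadd (vadd a b) c = vadd a (vadd b c) := by decide
lemma act_add : ∀ k l : Fin 7, ∀ v : V3, act (k + l) v = act k (act l v) := by decide
lemma act_vadd : ∀ (k : Fin 7) (v w : V3), act k (vadd v w) = vadd (act k v) (act k w) := by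
  decide

lemma fc_assoc : ∀ a b c : Fc, a * b * c = a * (b * c) := by
  rintro ⟨v, k⟩ ⟨w, l⟩ ⟨u, m⟩
  show (vadd (vadd v (act k w)) (act (k + l) u), k + l + m)
      = (vadd v (act k (vadd w (act l u))), k + (l + m))
  rw [act_vadd, act_add, vadd_assoc', add_assoc]
lemma fc_one_mul : ∀ a : Fc, 1 * a = a := by decide
lemma fc_inv_mul : ∀ a : Fc, a⁻¹ * a = 1 := by decide

instance : Group Fc := Group.ofLeftAxioms fc_assoc fc_one_mul fc_inv_mul

/-- The Sylow 7-subgroup `{((0,0,0), k)}` of `Fc`. -/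
def H0 : Subgroup Fc where
  carrier := {x | x.1 = (false, false, false)}
  mul_mem' := by
    intro a b (ha : a.1 = _) (hb : b.1 = _)
    show (a * b).1 = _
    rcases a with ⟨v, k⟩; rcases b with ⟨w, l⟩
    simp only at ha hb
    subst ha; subst hb
    revert k l; decide
  one_mem' := rfl
  inv_mem' := by
    intro a (ha : a.1 = _)
    show a⁻¹.1 = _
    rcases a with ⟨v, k⟩
    simp only at ha; subst ha
    revert k; decide

instance : DecidablePred (· ∈ H0) := fun x =>
  decidable_of_iff (x.1 = (false, false, false)) Iff.rfl

def rc : Fc → ℕ := fun x =>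
  if x.1 = (false, false, false) then 1 else if x.2 = 0 then 2 else 7

lemma H0_key : ∀ y : Fc, 0 < rc y ∧ y ^ rc y ∈ H0 ∧ ∀ k < rc y, 0 < k → y ^ k ∉ H0 := by
  decide

lemma sum_rc : ∑ x : Fc, rc x = 315 := by decide

lemma card_Fc : Fintype.card Fc = 56 := by decide

lemma card_H0 : Nat.card H0 = 7 := by
  rw [Nat.card_eq_fintype_card]
  decide

/-! ### Solvability of `Fc` -/

/-- The normal subgroup `(C₂)³` of `Fc`. -/
def NV : Subgroup Fc where
  carrier := {x | x.2 = 0}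
  mul_mem' := by
    intro a b (ha : a.2 = 0) (hb : b.2 = 0)
    show a.2 + b.2 = 0
    rw [ha, hb]; rfl
  one_mem' := rfl
  inv_mem' := by
    intro a (ha : a.2 = 0)
    show -a.2 = 0
    rw [ha]; rfl

def fcProj : Fc →* Multiplicative (Fin 7) where
  toFun x := Multiplicative.ofAdd x.2
  map_one' := rfl
  map_mul' := fun _ _ => rfl

lemma NV_comm : ∀ a b : Fc, a.2 = 0 → b.2 = 0 → a * b = b * a := by decide

instance : Group.IsSolvable Fc := by
  haveI : Group.IsSolvable NV := isSolvable_of_comm (by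
    rintro ⟨a, ha⟩ ⟨b, hb⟩
    exact Subtype.ext (NV_comm a b ha hb))
  refine solvable_of_ker_le_range NV.subtype fcProj ?_
  intro x hx
  have h2 : x.2 = 0 := by
    have : Multiplicative.ofAdd x.2 = 1 := hx
    exact ofAdd_eq_one.mp this
  exact ⟨⟨x, h2⟩, rfl⟩

/-! ### ψ of a cyclic group of order 8 -/

def oc8 : Multiplicative (ZMod 8) → ℕ := fun z =>
  if z = 1 then 1 else if z ^ 2 = 1 then 2 else if z ^ 4 = 1 then 4 else 8

lemma oc8_key : ∀ z : Multiplicative (ZMod 8),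
    0 < oc8 z ∧ z ^ oc8 z = 1 ∧ ∀ m < oc8 z, 0 < m → z ^ m ≠ 1 := by decide

lemma psi_cyclic_eight (Q : Type*) [Group Q] [Fintype Q] (h : IsCyclic Q)
    (hc : Nat.card Q = 8) : psi Q = 43 := by
  have e : Multiplicative (ZMod 8) ≃* Q := hc ▸ zmodCyclicMulEquiv h
  have horder : ∀ z : Multiplicative (ZMod 8), orderOf (e z) = oc8 z := by
    intro z
    have h1 : orderOf (e z) = orderOf z := orderOf_injective e.toMonoidHom e.injective z
    rw [h1]
    exact (orderOf_eq_iff (oc8_key z).1).mpr ⟨(oc8_key z).2.1, (oc8_key z).2.2⟩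
  have : psi Q = ∑ z : Multiplicative (ZMod 8), orderOf (e z) :=
    (Fintype.sum_equiv e.toEquiv _ _ (fun z => rfl)).symm
  rw [this]
  simp_rw [horder]
  decide

/-! ### `psiRel` for a cyclic group of order `56 q` at a subgroup of order `7 q` -/

lemma relOrder_eq_orderOf_quotient {C : Type*} [Group C] [Finite C] (K : Subgroup C)
    [K.Normal] (x : C) :
    relOrder K x = orderOf (QuotientGroup.mk x : C ⧸ K) := by
  set y : C ⧸ K := QuotientGroup.mk x
  have hmk : ∀ n : ℕ, (QuotientGroup.mk (x ^ n) : C ⧸ K) = y ^ n := fun n => by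
    simp [y, QuotientGroup.mk_pow]
  refine relOrder_eq _ _ _ (orderOf_pos y) ?_ ?_
  · rw [← QuotientGroup.eq_one_iff, hmk, pow_orderOf_eq_one]
  · intro k hk hk0 hmem
    rw [← QuotientGroup.eq_one_iff, hmk] at hmem
    exact absurd (Nat.le_of_dvd hk0 (orderOf_dvd_of_pow_eq_one hmem)) (not_le.mpr hk)

lemma psiRel_cyclic (C : Type*) [Group C] [Fintype C] (hC : IsCyclic C)
    (q : ℕ) (hq : 0 < q) (hcard : Fintype.card C = 56 * q)
    (K : Subgroup C) (hK : Nat.card K = 7 * q) : psiRel C K = 301 * q := by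
  classical
  have hcomm : ∀ a b : C, a * b = b * a := by
    letI := hC.commGroup
    exact fun a b => mul_comm a b
  haveI : K.Normal := ⟨fun n hn g => by
    rw [hcomm g n, mul_assoc, mul_inv_cancel, mul_one]; exact hn⟩
  haveI : Fintype (C ⧸ K) := Fintype.ofFinite _
  have hQc : IsCyclic (C ⧸ K) := isCyclic_of_surjective _ (QuotientGroup.mk'_surjective K)
  have hcardQ : Nat.card (C ⧸ K) = 8 := by
    have h1 : Nat.card C = Nat.card (C ⧸ K) * Nat.card K :=
      Subgroup.card_eq_card_quotient_mul_card_subgroup K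
    rw [Nat.card_eq_fintype_card, hcard, hK] at h1
    have h7q : 0 < 7 * q := by positivity
    have : 8 * (7 * q) = Nat.card (C ⧸ K) * (7 * q) := by rw [← h1]; ring
    exact (Nat.eq_of_mul_eq_mul_right h7q this).symm
  have hpsiQ : psi (C ⧸ K) = 43 := psi_cyclic_eight _ hQc hcardQ
  have hfib : ∀ y : C ⧸ K,
      (Finset.univ.filter (fun x : C => (QuotientGroup.mk x : C ⧸ K) = y)).card
        = Nat.card K := by
    intro y
    rw [← Fintype.card_subtype]
    have e1 : {x : C // (QuotientGroup.mk x : C ⧸ K) = y}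
        ≃ (QuotientGroup.mk ⁻¹' ({y} : Set (C ⧸ K)) : Set C) :=
      Equiv.subtypeEquivRight (by intro x; simp)
    have e2 := QuotientGroup.preimageMkEquivSubgroupProdSet K ({y} : Set (C ⧸ K))
    have : Nat.card {x : C // (QuotientGroup.mk x : C ⧸ K) = y}
        = Nat.card K * Nat.card ({y} : Set (C ⧸ K)) := by
      rw [Nat.card_congr (e1.trans e2), Nat.card_prod]
    have h3 : Nat.card ({y} : Set (C ⧸ K)) = 1 := Nat.card_unique
    rw [← Nat.card_eq_fintype_card, this, h3, mul_one]
  calc psiRel C K = ∑ x : C, orderOf (QuotientGroup.mk x : C ⧸ K) := by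
        unfold psiRel
        exact Finset.sum_congr rfl fun x _ => relOrder_eq_orderOf_quotient K x
    _ = ∑ y : C ⧸ K, ∑ x ∈ Finset.univ.filter
          (fun x : C => (QuotientGroup.mk x : C ⧸ K) = y), orderOf y :=
        (Finset.sum_fiberwise' Finset.univ _ _).symm
    _ = ∑ y : C ⧸ K, Nat.card K * orderOf y := by
        refine Finset.sum_congr rfl fun y _ => ?_
        rw [Finset.sum_const, hfib y, smul_eq_mul]
    _ = Nat.card K * psi (C ⧸ K) := by rw [← Finset.mul_sum]; rfl
    _ = 301 * q := by rw [hK, hpsiQ]; ring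

/-! ### `psiRel` of the product group -/

lemma relOrder_prod {M : Type*} [Group M] (a : Fc) (b : M) :
    relOrder (H0.prod ⊤) (a, b) = rc a := by
  refine relOrder_eq _ _ _ (H0_key a).1 ?_ ?_
  · refine Subgroup.mem_prod.mpr ⟨?_, trivial⟩
    exact (H0_key a).2.1
  · intro k hk hk0 hmem
    have : a ^ k ∈ H0 := (Subgroup.mem_prod.mp hmem).1
    exact (H0_key a).2.2 k hk hk0 this

lemma psiRel_prod (M : Type*) [Group M] [Fintype M] :
    psiRel (Fc × M) (H0.prod ⊤) = Fintype.card M * 315 := by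
  unfold psiRel
  rw [Fintype.sum_prod_type]
  have : ∀ a : Fc, ∑ b : M, relOrder (H0.prod ⊤) (a, b) = Fintype.card M * rc a := by
    intro a
    simp [relOrder_prod, Finset.sum_const, Finset.card_univ, mul_comm]
  simp_rw [this]
  rw [← Finset.mul_sum, sum_rc]

theorem infinitely_many_counterexamples :
    ∀ N : ℕ, ∃ (G : Type) (_ : Group G) (_ : Fintype G), IsSolvable G ∧
      N < Fintype.card G ∧
      ∃ H : Subgroup G,
        ∀ (C : Type) (_ : Group C) (_ : Fintype C), IsCyclic C →
          Fintype.card C = Fintype.card G →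
          ∀ K : Subgroup C, Nat.card K = Nat.card H →
            psiRel C K < psiRel G H := by
  intro N
  refine ⟨Fc × Multiplicative (ZMod (N + 1)), inferInstance, inferInstance, (inferInstance : Group.IsSolvable _),
    ?_, ?_⟩
  · rw [Fintype.card_prod, card_Fc, Fintype.card_multiplicative, ZMod.card]
    omega
  · refine ⟨H0.prod ⊤, ?_⟩
    intro C _ _ hC hcard K hK
    have hcardM : Fintype.card (Multiplicative (ZMod (N + 1))) = N + 1 := by
      rw [Fintype.card_multiplicative, ZMod.card]
    have hcardG : Fintype.card (Fc × Multiplicative (ZMod (N + 1))) = 56 * (N + 1) := by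
      rw [Fintype.card_prod, card_Fc, hcardM]
    have hcardH : Nat.card (H0.prod (⊤ : Subgroup (Multiplicative (ZMod (N + 1)))))
        = 7 * (N + 1) := by
      rw [Nat.card_congr (Subgroup.prodEquiv H0 ⊤).toEquiv, Nat.card_prod, card_H0,
        Subgroup.card_top, Nat.card_eq_fintype_card, hcardM]
    have hCK : psiRel C K = 301 * (N + 1) := by
      refine psiRel_cyclic C hC (N + 1) (Nat.succ_pos N) ?_ K ?_
      · rw [hcard, hcardG]
      · rw [hK, hcardH]
    rw [hCK, psiRel_prod, hcardM]
    nlinarith [Nat.succ_pos N]
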